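/- Let A = [[2 - t⁻¹, 2t - 1, 0], [0, 2t - 1, 2 - t⁻¹]] and B = [[2 - t⁻¹, 2t - 1, 0], [0, -2 + t, 2 - t]] be 2×3 matrices over ℤ[t, t⁻¹]. Then the ideal of ℤ[t, t⁻¹] generated by the 2×2 minors of A is the principal ideal generated by (2 - t⁻¹)², while the ideal generated by the 2×2 minors of B is the principal ideal generated by (2 - t⁻¹)(2 - t), and these two ideals are distinct. -/

import Mathlib

open LaurentPolynomial

/-- The set of 2×2 minors of a 2×3 matrix. -/
def minors2x3 {R : Type*} [CommRing R] (M : Matrix (Fin 2) (Fin 3) R) : Set R :=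
  { M 0 0 * M 1 1 - M 0 1 * M 1 0,
    M 0 0 * M 1 2 - M 0 2 * M 1 0,
    M 0 1 * M 1 2 - M 0 2 * M 1 1 }

/-- The presentation matrix of π₁(W₂₂). -/
noncomputable def matA : Matrix (Fin 2) (Fin 3) (LaurentPolynomial ℤ) :=
  !![2 - T (-1), 2 * T 1 - 1, 0;
     0, 2 * T 1 - 1, 2 - T (-1)]

/-- The presentation matrix of π₁(W₁₂). -/
noncomputable def matB : Matrix (Fin 2) (Fin 3) (LaurentPolynomial ℤ) :=
  !![2 - T (-1), 2 * T 1 - 1, 0;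
     0, -2 + T 1, 2 - T 1]

/-- Evaluation of Laurent polynomials at `t = 2` in `ℚ`. -/
noncomputable def ev2 : LaurentPolynomial ℤ →ₐ[ℤ] ℚ :=
  AddMonoidAlgebra.lift ℤ ℚ ℤ
    ((Units.coeHom ℚ).comp (zpowersHom ℚˣ (Units.mk0 2 two_ne_zero)))

lemma ev2_T (n : ℤ) : ev2 (T n) = (2 : ℚ) ^ n := by
  rw [ev2, T, AddMonoidAlgebra.lift_single, one_smul, MonoidHom.comp_apply,
    zpowersHom_apply]
  norm_num

lemma hT : (T 1 : LaurentPolynomial ℤ) * T (-1) = 1 := by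
  rw [← T_add]; norm_num [T_zero]

theorem minor_ideals :
    Ideal.span (minors2x3 matA) = Ideal.span {(2 - T (-1) : LaurentPolynomial ℤ) ^ 2} ∧
    Ideal.span (minors2x3 matB) =
      Ideal.span {((2 - T (-1)) * (2 - T 1) : LaurentPolynomial ℤ)} ∧
    Ideal.span (minors2x3 matA) ≠ Ideal.span (minors2x3 matB) := by
  have hA : Ideal.span (minors2x3 matA) =
      Ideal.span {(2 - T (-1) : LaurentPolynomial ℤ) ^ 2} := by
    apply le_antisymm
    · rw [Ideal.span_le]
      rintro x hx
      simp only [minors2x3, Set.mem_insert_iff, Set.mem_singleton_iff] at hx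
      simp only [matA, Matrix.cons_val', Matrix.cons_val_zero, Matrix.empty_val',
        Matrix.cons_val_fin_one, Matrix.cons_val_one, Matrix.head_cons,
        Matrix.head_fin_const, Matrix.cons_val_two, Matrix.tail_cons, Matrix.of_apply] at hx
      rw [SetLike.mem_coe, Ideal.mem_span_singleton]
      rcases hx with rfl | rfl | rfl
      · exact ⟨T 1, by linear_combination (2 - T (-1) : LaurentPolynomial ℤ) * hT⟩
      · exact ⟨1, by ring⟩
      · exact ⟨T 1, by linear_combination (2 - T (-1) : LaurentPolynomial ℤ) * hT⟩
    · rw [Ideal.span_le, Set.singleton_subset_iff, SetLike.mem_coe]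
      apply Ideal.subset_span
      simp only [minors2x3, Set.mem_insert_iff, Set.mem_singleton_iff]
      simp only [matA, Matrix.cons_val', Matrix.cons_val_zero, Matrix.empty_val',
        Matrix.cons_val_fin_one, Matrix.cons_val_one, Matrix.head_cons,
        Matrix.head_fin_const, Matrix.cons_val_two, Matrix.tail_cons, Matrix.of_apply]
      right; left
      ring
  have hB : Ideal.span (minors2x3 matB) =
      Ideal.span {((2 - T (-1)) * (2 - T 1) : LaurentPolynomial ℤ)} := by
    apply le_antisymm
    · rw [Ideal.span_le]
      rintro x hx
      simp only [minors2x3, Set.mem_insert_iff, Set.mem_singleton_iff] at hx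
      simp only [matB, Matrix.cons_val', Matrix.cons_val_zero, Matrix.empty_val',
        Matrix.cons_val_fin_one, Matrix.cons_val_one, Matrix.head_cons,
        Matrix.head_fin_const, Matrix.cons_val_two, Matrix.tail_cons, Matrix.of_apply] at hx
      rw [SetLike.mem_coe, Ideal.mem_span_singleton]
      rcases hx with rfl | rfl | rfl
      · exact ⟨-1, by ring⟩
      · exact ⟨1, by ring⟩
      · exact ⟨T 1, by linear_combination (2 - T 1 : LaurentPolynomial ℤ) * hT⟩
    · rw [Ideal.span_le, Set.singleton_subset_iff, SetLike.mem_coe]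
      apply Ideal.subset_span
      simp only [minors2x3, Set.mem_insert_iff, Set.mem_singleton_iff]
      simp only [matB, Matrix.cons_val', Matrix.cons_val_zero, Matrix.empty_val',
        Matrix.cons_val_fin_one, Matrix.cons_val_one, Matrix.head_cons,
        Matrix.head_fin_const, Matrix.cons_val_two, Matrix.tail_cons, Matrix.of_apply]
      right; left
      ring
  refine ⟨hA, hB, ?_⟩
  intro h
  rw [hA, hB] at h
  have hmem : ((2 - T (-1) : LaurentPolynomial ℤ) ^ 2) ∈
      Ideal.span {((2 - T (-1)) * (2 - T 1) : LaurentPolynomial ℤ)} := by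
    rw [← h]
    exact Ideal.subset_span rfl
  rw [Ideal.mem_span_singleton] at hmem
  obtain ⟨d, hd⟩ := hmem
  have := congrArg ev2 hd
  simp only [map_pow, map_mul, map_sub, map_ofNat, ev2_T] at this
  norm_num at this
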